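/- Let V ⊆ Z and U ⊆ Z be Banach spaces continuously embedded in a Banach space Z, with X = U ∩ V normed by ‖u‖_X = ‖u‖_U + ‖u‖_V. Let Ψ : V → [0, +∞) be proper, lower semicontinuous, convex with Ψ(0)=0, and let Ψ̃ = Ψ|_X denote its restriction to X. Then the convex conjugate Ψ̃* : X* → (-∞,+∞] satisfies: if ξ ∈ X* extends to an element of V* (i.e., ξ is continuous for the V-norm on X and X is dense in V), then Ψ̃*(ξ) = Ψ*(ξ); in particular, if v ∈ X and η ∈ ∂_X Ψ̃(v) with Ψ̃(v) + Ψ̃*(η) = ⟨η, v⟩ < +∞ and Ψ̃* = +∞ on X* \ V*, then η ∈ V*. -/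

import Mathlib

open Topology

/-- A lower semicontinuous convex real-valued function on a Banach space is continuous. -/
theorem lsc_convex_continuous {V : Type*} [NormedAddCommGroup V] [NormedSpace ℝ V]
    [CompleteSpace V] (Ψ : V → ℝ) (hconv : ConvexOn ℝ Set.univ Ψ)
    (hlsc : LowerSemicontinuous Ψ) : Continuous Ψ := by
  -- Baire: some sublevel set has nonempty interior
  have hcov : (⋃ n : ℕ, {v : V | Ψ v ≤ n}) = Set.univ := by
    ext v
    simp only [Set.mem_iUnion, Set.mem_setOf_eq, Set.mem_univ, iff_true]
    obtain ⟨n, hn⟩ := exists_nat_ge (Ψ v)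
    exact ⟨n, hn⟩
  obtain ⟨n, x₀, hx₀⟩ := nonempty_interior_of_iUnion_of_closed
    (fun n : ℕ => hlsc.isClosed_preimage n) hcov
  have hbdd : (𝓝 x₀).IsBoundedUnder (· ≤ ·) Ψ := by
    refine ⟨n, ?_⟩
    filter_upwards [mem_interior_iff_mem_nhds.1 hx₀] with y hy using hy
  have htfae := hconv.continuousOn_tfae isOpen_univ ⟨0, Set.mem_univ 0⟩
  have h42 := htfae.out 3 1
  have : ContinuousOn Ψ Set.univ := h42.1 ⟨x₀, Set.mem_univ x₀, hbdd⟩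
  exact continuousOn_univ.1 this

/-- Let `ι : X → V` be a continuous dense embedding (modelling
`X = U ∩ V ⊂ V`) and `Ψ : V → [0,∞)` proper lsc convex with `Ψ(0)=0`, with
restriction `Ψ̃ = Ψ ∘ ι`. Then (i) for every functional `ξ` on `X` extending to
`ξV ∈ V*`, one has `Ψ̃*(ξ) = Ψ*(ξV)`; and (ii) if `v ∈ X`, `η ∈ ∂_X Ψ̃(v)` with
`Ψ̃(v) + Ψ̃*(η) = ⟨η, v⟩ < +∞`, and `Ψ̃* = +∞` on `X* \ V*`, then `η ∈ V*`. -/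
theorem stmt19 {V X : Type*}
    [NormedAddCommGroup V] [NormedSpace ℝ V] [CompleteSpace V]
    [NormedAddCommGroup X] [NormedSpace ℝ X]
    (ι : X →L[ℝ] V) (hdense : DenseRange ι)
    (Ψ : V → ℝ) (hnn : ∀ v, 0 ≤ Ψ v) (h0 : Ψ 0 = 0)
    (hconv : ConvexOn ℝ Set.univ Ψ) (hlsc : LowerSemicontinuous Ψ) :
    (∀ ξV : V →L[ℝ] ℝ,
      (⨆ x : X, ((ξV (ι x) - Ψ (ι x) : ℝ) : EReal)) =
        ⨆ v : V, ((ξV v - Ψ v : ℝ) : EReal)) ∧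
    (∀ (v : X) (η : X →L[ℝ] ℝ),
      (∀ w : X, ((Ψ (ι v) : ℝ) : EReal) + ((η (w - v) : ℝ) : EReal) ≤ ((Ψ (ι w) : ℝ) : EReal)) →
      (((Ψ (ι v) : ℝ) : EReal) + (⨆ x : X, ((η x - Ψ (ι x) : ℝ) : EReal)) = ((η v : ℝ) : EReal)) →
      (∀ ζ : X →L[ℝ] ℝ, (¬ ∃ ζV : V →L[ℝ] ℝ, ∀ x, ζ x = ζV (ι x)) →
        (⨆ x : X, ((ζ x - Ψ (ι x) : ℝ) : EReal)) = ⊤) →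
      ∃ ηV : V →L[ℝ] ℝ, ∀ x, η x = ηV (ι x)) := by
  have hcont : Continuous Ψ := lsc_convex_continuous Ψ hconv hlsc
  constructor
  · intro ξV
    have hf : Continuous fun v : V => ξV v - Ψ v := ξV.continuous.sub hcont
    apply le_antisymm
    · exact iSup_le fun x => le_iSup_of_le (ι x) le_rfl
    · refine iSup_le fun v => ?_
      apply le_of_forall_lt
      intro c hc
      -- c < (f v : EReal); find x with c < f (ι x)
      induction c using EReal.rec with
      | bot =>
        refine lt_of_lt_of_le (EReal.bot_lt_coe _) (le_iSup_of_le 0 le_rfl)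
      | coe r =>
        have hr : r < ξV v - Ψ v := by exact_mod_cast hc
        obtain ⟨x, hx⟩ := hdense.exists_mem_open (isOpen_lt continuous_const hf)
          ⟨v, hr⟩
        refine lt_of_lt_of_le ?_ (le_iSup_of_le x le_rfl)
        exact_mod_cast hx
      | top => exact absurd hc (not_top_lt)
  · intro v η hsub heq hdich
    by_contra h
    have htop := hdich η h
    rw [htop] at heq
    rw [EReal.add_top_of_ne_bot (EReal.coe_ne_bot _)] at heq
    exact EReal.coe_ne_top _ heq.symm
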